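/- Let H : E → ℝ be smooth, U ⊆ E an open set on which the elementary action ρ(x) = Σⱼ pⱼ ∂H/∂pⱼ(x) − H(x) is nonzero, and F : U → ℝ a smooth first integral (dF(x)(Z_H(x)) = 0 on U). Define the vector field ζ = (τ, ξ, η) on U by τ = ρ⁻¹ F − ρ⁻¹ Σⱼ (∂F/∂pⱼ) pⱼ, ξⁱ = ρ⁻¹ F ∂H/∂pᵢ − ρ⁻¹ Σⱼ (∂F/∂pⱼ) pⱼ ∂H/∂pᵢ + ∂F/∂pᵢ, ηⁱ = −ρ⁻¹ F ∂H/∂qᵢ + ρ⁻¹ Σⱼ (∂F/∂pⱼ) pⱼ ∂H/∂qᵢ − ∂F/∂qᵢ, for i = 1,…,n. Then ζ is a Noether symmetry on U with Noether integral F: L_ζ α_H = 0 on U and α_H(x)(ζ(x)) = F(x) for all x ∈ U. -/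

import Mathlib

noncomputable section
open scoped ContDiff

/-- The extended phase space `E = ℝ × ℝⁿ × ℝⁿ`, with points `x = (t, q, p)`. -/
abbrev EE (n : ℕ) : Type := ℝ × (Fin n → ℝ) × (Fin n → ℝ)

/-- The Poincaré–Cartan 1-form `α_H = p dq − H dt`:
`α_H(x)(τ̂, ξ̂, η̂) = ∑ i, pᵢ ξ̂ᵢ − H(x) τ̂`. -/
def pcForm {n : ℕ} (H : EE n → ℝ) (x : EE n) : EE n →L[ℝ] ℝ :=
  (∑ i, x.2.2 i • ((ContinuousLinearMap.proj i).comp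
      ((ContinuousLinearMap.fst ℝ (Fin n → ℝ) (Fin n → ℝ)).comp
        (ContinuousLinearMap.snd ℝ ℝ ((Fin n → ℝ) × (Fin n → ℝ))))))
    - H x • ContinuousLinearMap.fst ℝ ℝ ((Fin n → ℝ) × (Fin n → ℝ))

/-- The vector field `Z_H(x) = (1, ∂H/∂p(x), −∂H/∂q(x))` of Hamilton's equations. -/
def ZH {n : ℕ} (H : EE n → ℝ) (x : EE n) : EE n :=
  (1, fun i => fderiv ℝ H x (0, 0, Pi.single i 1),
      fun i => - fderiv ℝ H x (0, Pi.single i 1, 0))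

/-- The Lie derivative of a 1-form `α` along a vector field `ζ`:
`(L_ζ α)(x)(v) = (Dα(x)(ζ(x)))(v) + α(x)(Dζ(x)(v))`. -/
def lieDeriv {n : ℕ} (ζ : EE n → EE n) (α : EE n → (EE n →L[ℝ] ℝ)) (x : EE n) :
    EE n →L[ℝ] ℝ :=
  fderiv ℝ α x (ζ x) + (α x).comp (fderiv ℝ ζ x)

/-- The exterior derivative of a 1-form:
`dα(x)(u,v) = (Dα(x)u)(v) − (Dα(x)v)(u)`. -/
def extDerivOneForm {n : ℕ} (α : EE n → (EE n →L[ℝ] ℝ)) (x u v : EE n) : ℝ :=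
  fderiv ℝ α x u v - fderiv ℝ α x v u

/-- The elementary action `ρ(x) = ∑ⱼ pⱼ ∂H/∂pⱼ(x) − H(x)`. -/
def elemAction {n : ℕ} (H : EE n → ℝ) (x : EE n) : ℝ :=
  (∑ j, x.2.2 j * fderiv ℝ H x (0, 0, Pi.single j 1)) - H x

/-- inverse Noether theorem: on an open set `U` where the elementary
action `ρ ≠ 0`, every first integral `F` of Hamilton's equations gives rise to a
Noether symmetry `ζ = (τ, ξ, η)` with `τ = ρ⁻¹F − ρ⁻¹∑ⱼ(∂F/∂pⱼ)pⱼ`,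
`ξⁱ = ρ⁻¹F ∂H/∂pᵢ − ρ⁻¹∑ⱼ(∂F/∂pⱼ)pⱼ ∂H/∂pᵢ + ∂F/∂pᵢ`,
`ηⁱ = −ρ⁻¹F ∂H/∂qᵢ + ρ⁻¹∑ⱼ(∂F/∂pⱼ)pⱼ ∂H/∂qᵢ − ∂F/∂qᵢ`:
it satisfies `L_ζ α_H = 0` on `U` and its Noether integral is `α_H(ζ) = F`. -/
lemma pcForm_apply {n : ℕ} (H : EE n → ℝ) (x : EE n) (v : EE n) :
    pcForm H x v = (∑ i, x.2.2 i * v.2.1 i) - H x * v.1 := by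
  simp [pcForm, ContinuousLinearMap.sum_apply]

lemma clm_decomp {n : ℕ} (L : EE n →L[ℝ] ℝ) (v : EE n) :
    L v = v.1 * L (1, 0, 0) + (∑ i, v.2.1 i * L (0, Pi.single i 1, 0))
      + ∑ i, v.2.2 i * L (0, 0, Pi.single i 1) := by
  have hv : v = v.1 • ((1:ℝ), (0 : Fin n → ℝ), (0 : Fin n → ℝ))
      + (∑ i, v.2.1 i • (((0:ℝ), Pi.single i 1, (0 : Fin n → ℝ)) : EE n))
      + ∑ i, v.2.2 i • (((0:ℝ), (0 : Fin n → ℝ), Pi.single i 1) : EE n) := by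
    refine Prod.ext ?_ (Prod.ext ?_ ?_)
    · simp [Prod.fst_sum]
    · funext j
      simp [Prod.fst_sum, Prod.snd_sum, Pi.single_apply, Finset.sum_apply]
    · funext j
      simp [Prod.fst_sum, Prod.snd_sum, Pi.single_apply, Finset.sum_apply]
  conv_lhs => rw [hv]
  simp only [map_add, map_sum, map_smul, smul_eq_mul]

def pcL (n : ℕ) : EE n →L[ℝ] (EE n →L[ℝ] ℝ) :=
  ∑ i, (((ContinuousLinearMap.proj i).comp
      ((ContinuousLinearMap.snd ℝ (Fin n → ℝ) (Fin n → ℝ)).comp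
        (ContinuousLinearMap.snd ℝ ℝ ((Fin n → ℝ) × (Fin n → ℝ))))).smulRight
    ((ContinuousLinearMap.proj i).comp
      ((ContinuousLinearMap.fst ℝ (Fin n → ℝ) (Fin n → ℝ)).comp
        (ContinuousLinearMap.snd ℝ ℝ ((Fin n → ℝ) × (Fin n → ℝ))))))

lemma pcForm_eq {n : ℕ} (H : EE n → ℝ) :
    pcForm H = fun y => pcL n y - H y • ContinuousLinearMap.fst ℝ ℝ ((Fin n → ℝ) × (Fin n → ℝ)) := by
  funext y
  simp [pcForm, pcL, ContinuousLinearMap.sum_apply]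

lemma hasFDerivAt_pcForm {n : ℕ} (H : EE n → ℝ) {x : EE n} (hH : DifferentiableAt ℝ H x) :
    HasFDerivAt (pcForm H)
      (pcL n - (fderiv ℝ H x).smulRight (ContinuousLinearMap.fst ℝ ℝ ((Fin n → ℝ) × (Fin n → ℝ)))) x := by
  rw [pcForm_eq]
  exact (pcL n).hasFDerivAt.sub (hH.hasFDerivAt.smul_const (ContinuousLinearMap.fst ℝ ℝ ((Fin n → ℝ) × (Fin n → ℝ))))

lemma fderiv_pcForm_apply {n : ℕ} (H : EE n → ℝ) (x : EE n) (hH : DifferentiableAt ℝ H x)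
    (u v : EE n) :
    fderiv ℝ (pcForm H) x u v = (∑ i, u.2.2 i * v.2.1 i) - fderiv ℝ H x u * v.1 := by
  rw [(hasFDerivAt_pcForm H hH).fderiv]
  simp [pcL, ContinuousLinearMap.sum_apply, mul_comm]

theorem inverse_noether {n : ℕ} (hn : 1 ≤ n)
    (H : EE n → ℝ) (hH : ContDiff ℝ ∞ H)
    (U : Set (EE n)) (hU : IsOpen U)
    (hρ : ∀ x ∈ U, elemAction H x ≠ 0)
    (F : EE n → ℝ) (hF : ContDiffOn ℝ ∞ F U)
    (hFint : ∀ x ∈ U, fderiv ℝ F x (ZH H x) = 0)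
    (ζ : EE n → EE n)
    (hζ : ∀ x ∈ U, ζ x =
      ((elemAction H x)⁻¹ * F x
          - (elemAction H x)⁻¹ * ∑ j, fderiv ℝ F x (0, 0, Pi.single j 1) * x.2.2 j,
       fun i => (elemAction H x)⁻¹ * F x * fderiv ℝ H x (0, 0, Pi.single i 1)
          - (elemAction H x)⁻¹ * (∑ j, fderiv ℝ F x (0, 0, Pi.single j 1) * x.2.2 j)
              * fderiv ℝ H x (0, 0, Pi.single i 1)
          + fderiv ℝ F x (0, 0, Pi.single i 1),
       fun i => - ((elemAction H x)⁻¹ * F x * fderiv ℝ H x (0, Pi.single i 1, 0))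
          + (elemAction H x)⁻¹ * (∑ j, fderiv ℝ F x (0, 0, Pi.single j 1) * x.2.2 j)
              * fderiv ℝ H x (0, Pi.single i 1, 0)
          - fderiv ℝ F x (0, Pi.single i 1, 0))) :
    (∀ x ∈ U, lieDeriv ζ (pcForm H) x = 0) ∧ (∀ x ∈ U, pcForm H x (ζ x) = F x) := by
  have hHd : Differentiable ℝ H := hH.differentiable (by simp)
  -- Part 2: the Noether integral.
  have key : ∀ x ∈ U, pcForm H x (ζ x) = F x := by
    intro x hx
    have hne : elemAction H x ≠ 0 := hρ x hx
    rw [pcForm_apply, hζ x hx]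
    have e1 : ∀ (p Hp Fp : Fin n → ℝ) (a b : ℝ),
        ∑ i, p i * (a * Hp i - b * Hp i + Fp i)
          = (a - b) * (∑ i, p i * Hp i) + ∑ j, Fp j * p j := by
      intro p Hp Fp a b
      rw [Finset.mul_sum, ← Finset.sum_add_distrib]
      exact Finset.sum_congr rfl fun i _ => by ring
    dsimp only
    rw [e1 x.2.2 (fun i => fderiv ℝ H x (0, 0, Pi.single i 1))
      (fun j => fderiv ℝ F x (0, 0, Pi.single j 1))
      ((elemAction H x)⁻¹ * F x)
      ((elemAction H x)⁻¹ * ∑ j, fderiv ℝ F x (0, 0, Pi.single j 1) * x.2.2 j)]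
    have hT : (∑ i, x.2.2 i * fderiv ℝ H x (0, 0, Pi.single i 1)) = elemAction H x + H x := by
      simp [elemAction]
    rw [hT]
    field_simp [hne]
    ring
  refine ⟨?_, key⟩
  intro x hx
  have hmem := hU.mem_nhds hx
  have hne := hρ x hx
  -- differentiability atoms
  have hFx : DifferentiableAt ℝ F x := (hF.contDiffAt hmem).differentiableAt (by simp)
  have hH1 : ContDiff ℝ ∞ (fderiv ℝ H) := hH.fderiv_right (le_of_eq (show ∞ + 1 = ∞ from rfl))
  have hHv : ∀ v : EE n, DifferentiableAt ℝ (fun y => fderiv ℝ H y v) x := fun v =>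
    ((hH1.clm_apply contDiff_const).differentiable (by simp)).differentiableAt
  have h22j : ∀ j, DifferentiableAt ℝ (fun y : EE n => y.2.2 j) x := fun j =>
    ((differentiable_pi.mp (differentiable_snd.comp differentiable_snd)) j).differentiableAt
  have hρd : DifferentiableAt ℝ (elemAction H) x := by
    have : DifferentiableAt ℝ (fun y : EE n =>
        (∑ j, y.2.2 j * fderiv ℝ H y (0, 0, Pi.single j 1)) - H y) x :=
      DifferentiableAt.sub (DifferentiableAt.fun_sum fun j _ => (h22j j).mul (hHv _)) (hHd x)
    exact this
  have hρinv : DifferentiableAt ℝ (fun y => (elemAction H y)⁻¹) x := hρd.inv hne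
  have hFdC : ContDiffOn ℝ ∞ (fderiv ℝ F) U :=
    hF.fderiv_of_isOpen hU (le_of_eq (show ∞ + 1 = ∞ from rfl))
  have hFv : ∀ v : EE n, DifferentiableAt ℝ (fun y => fderiv ℝ F y v) x := fun v =>
    (((hFdC.contDiffAt hmem).clm_apply contDiffAt_const).differentiableAt (by simp))
  have hS : DifferentiableAt ℝ
      (fun y : EE n => ∑ j, fderiv ℝ F y (0, 0, Pi.single j 1) * y.2.2 j) x :=
    DifferentiableAt.fun_sum fun j _ => (hFv _).mul (h22j j)
  have hζdiff : DifferentiableAt ℝ ζ x := by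
    have hζ0 : DifferentiableAt ℝ (fun y : EE n =>
      (((elemAction H y)⁻¹ * F y
          - (elemAction H y)⁻¹ * ∑ j, fderiv ℝ F y (0, 0, Pi.single j 1) * y.2.2 j,
       fun i => (elemAction H y)⁻¹ * F y * fderiv ℝ H y (0, 0, Pi.single i 1)
          - (elemAction H y)⁻¹ * (∑ j, fderiv ℝ F y (0, 0, Pi.single j 1) * y.2.2 j)
              * fderiv ℝ H y (0, 0, Pi.single i 1)
          + fderiv ℝ F y (0, 0, Pi.single i 1),
       fun i => - ((elemAction H y)⁻¹ * F y * fderiv ℝ H y (0, Pi.single i 1, 0))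
          + (elemAction H y)⁻¹ * (∑ j, fderiv ℝ F y (0, 0, Pi.single j 1) * y.2.2 j)
              * fderiv ℝ H y (0, Pi.single i 1, 0)
          - fderiv ℝ F y (0, Pi.single i 1, 0)) : EE n)) x := by
      refine DifferentiableAt.prodMk ?_ (DifferentiableAt.prodMk ?_ ?_)
      · exact (hρinv.mul hFx).sub (hρinv.mul hS)
      · refine differentiableAt_pi.mpr fun i => ?_
        exact (((hρinv.mul hFx).mul (hHv _)).sub ((hρinv.mul hS).mul (hHv _))).add (hFv _)
      · refine differentiableAt_pi.mpr fun i => ?_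
        exact ((((hρinv.mul hFx).mul (hHv _)).neg).add ((hρinv.mul hS).mul (hHv _))).sub (hFv _)
    exact hζ0.congr_of_eventuallyEq (Filter.eventually_of_mem hmem fun y hy => hζ y hy)
  have hαd : DifferentiableAt ℝ (pcForm H) x := (hasFDerivAt_pcForm H (hHd x)).differentiableAt
  have hgf : fderiv ℝ (fun y => pcForm H y (ζ y)) x = fderiv ℝ F x :=
    Filter.EventuallyEq.fderiv_eq (Filter.eventually_of_mem hmem fun y hy => key y hy)
  have hcomp : (pcForm H x).comp (fderiv ℝ ζ x)
      = fderiv ℝ F x - (fderiv ℝ (pcForm H) x).flip (ζ x) := by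
    rw [← hgf, fderiv_clm_apply hαd hζdiff]
    abel
  show lieDeriv ζ (pcForm H) x = 0
  unfold lieDeriv
  rw [hcomp]
  have hζx := hζ x hx
  have happ := fderiv_pcForm_apply H x (hHd x)
  have hbq : ∀ i, (fderiv ℝ (pcForm H) x (ζ x)
      + (fderiv ℝ F x - (fderiv ℝ (pcForm H) x).flip (ζ x)))
      (((0:ℝ), Pi.single i 1, (0 : Fin n → ℝ)) : EE n) = 0 := by
    intro i
    simp only [ContinuousLinearMap.add_apply, ContinuousLinearMap.sub_apply,
      ContinuousLinearMap.flip_apply]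
    rw [happ, happ, hζx]
    simp only [Pi.single_apply, Pi.zero_apply, mul_ite, mul_one, mul_zero, ite_mul, zero_mul,
      one_mul, Finset.sum_ite_eq', Finset.mem_univ, if_true, Finset.sum_const_zero, sub_zero,
      zero_add]
    ring
  have hbp : ∀ i, (fderiv ℝ (pcForm H) x (ζ x)
      + (fderiv ℝ F x - (fderiv ℝ (pcForm H) x).flip (ζ x)))
      (((0:ℝ), (0 : Fin n → ℝ), Pi.single i 1) : EE n) = 0 := by
    intro i
    simp only [ContinuousLinearMap.add_apply, ContinuousLinearMap.sub_apply,
      ContinuousLinearMap.flip_apply]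
    rw [happ, happ, hζx]
    simp only [Pi.single_apply, Pi.zero_apply, mul_ite, mul_one, mul_zero, ite_mul, zero_mul,
      one_mul, Finset.sum_ite_eq', Finset.mem_univ, if_true, Finset.sum_const_zero, sub_zero,
      zero_add]
    ring
  have hb0 : (fderiv ℝ (pcForm H) x (ζ x)
      + (fderiv ℝ F x - (fderiv ℝ (pcForm H) x).flip (ζ x)))
      (((1:ℝ), (0 : Fin n → ℝ), (0 : Fin n → ℝ)) : EE n) = 0 := by
    have hc : (∑ i, (ζ x).2.1 i * fderiv ℝ H x (0, Pi.single i 1, 0))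
          + (∑ i, (ζ x).2.2 i * fderiv ℝ H x (0, 0, Pi.single i 1))
        = (∑ i, fderiv ℝ H x (0, Pi.single i 1, 0) * fderiv ℝ F x (0, 0, Pi.single i 1))
          - ∑ i, fderiv ℝ H x (0, 0, Pi.single i 1) * fderiv ℝ F x (0, Pi.single i 1, 0) := by
      rw [← Finset.sum_add_distrib, ← Finset.sum_sub_distrib]
      refine Finset.sum_congr rfl fun i _ => ?_
      rw [hζx]
      dsimp only
      ring
    have hZ' : fderiv ℝ F x ((1:ℝ), (0 : Fin n → ℝ), (0 : Fin n → ℝ))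
        + (∑ i, fderiv ℝ H x (0, 0, Pi.single i 1) * fderiv ℝ F x (0, Pi.single i 1, 0))
        - (∑ i, fderiv ℝ H x (0, Pi.single i 1, 0) * fderiv ℝ F x (0, 0, Pi.single i 1))
        = 0 := by
      have hZ := hFint x hx
      rw [clm_decomp] at hZ
      simp only [ZH, one_mul, neg_mul, Finset.sum_neg_distrib] at hZ
      linarith
    simp only [ContinuousLinearMap.add_apply, ContinuousLinearMap.sub_apply,
      ContinuousLinearMap.flip_apply]
    rw [happ, happ, clm_decomp (fderiv ℝ H x) (ζ x)]
    simp only [Pi.single_apply, Pi.zero_apply, mul_ite, mul_one, mul_zero, ite_mul, zero_mul,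
      one_mul, Finset.sum_ite_eq', Finset.mem_univ, if_true, Finset.sum_const_zero, sub_zero,
      zero_add]
    linarith [hc, hZ']
  refine ContinuousLinearMap.ext fun v => ?_
  rw [ContinuousLinearMap.zero_apply, clm_decomp, hb0]
  simp only [hbq, hbp, mul_zero, Finset.sum_const_zero, add_zero, zero_add]
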